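/- Let p ≥ 3 be a prime, and let j, h be integers with p not dividing j. Then ∑_{i=1}^{p} ∏_{l∈{1,…,p}, l≠i} (j² − (h−2l+1)²) ≡ ∑_{i=1}^{p} ∏_{l∈{1,…,p}, l≠i} (j² − (h+2l−1)²) (mod p³). -/

import Mathlib

open Polynomial Finset

private lemma taylor3 (Q : Polynomial ℤ) (t s : ℤ) :
    s ^ 3 ∣ Q.eval (t + s) -
      (Q.eval t + (derivative Q).eval t * s + (hasseDeriv 2 Q).eval t * s ^ 2) := by
  have h0 : Q.eval (t + s) = (taylor t Q).eval s := by rw [taylor_eval, add_comm]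
  rw [h0, Polynomial.eval_eq_sum_range' (n := (taylor t Q).natDegree + 3) (by omega)]
  rw [Finset.range_eq_Ico, ← Finset.sum_Ico_consecutive _ (by omega : 0 ≤ 3)
    (by omega : 3 ≤ (taylor t Q).natDegree + 3)]
  have h1 : ∑ i ∈ Finset.Ico 0 3, (taylor t Q).coeff i * s ^ i
      = Q.eval t + (derivative Q).eval t * s + (hasseDeriv 2 Q).eval t * s ^ 2 := by
    rw [← Finset.range_eq_Ico]
    rw [Finset.sum_range_succ, Finset.sum_range_succ, Finset.sum_range_one]
    simp [taylor_coeff_zero, taylor_coeff_one, taylor_coeff]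
  rw [h1, add_sub_cancel_left]
  apply Finset.dvd_sum
  intro i hi
  simp only [Finset.mem_Ico] at hi
  exact Dvd.dvd.mul_left (pow_dvd_pow s hi.1) _

private lemma deriv_prod (s : Finset ℕ) (f : ℕ → Polynomial ℤ)
    (hf : ∀ l, derivative (f l) = 1) :
    derivative (∏ l ∈ s, f l) = ∑ i ∈ s, ∏ l ∈ s.erase i, f l := by
  classical
  induction s using Finset.induction_on with
  | empty => simp
  | insert a s' ha ih =>
    rw [Finset.prod_insert ha, derivative_mul, hf, ih, Finset.sum_insert ha,
      Finset.erase_insert ha, one_mul, Finset.mul_sum]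
    congr 1
    refine Finset.sum_congr rfl fun i hi => ?_
    rw [Finset.erase_insert_of_ne (by rintro rfl; exact ha hi), Finset.prod_insert
      (fun hmem => ha (Finset.mem_of_mem_erase hmem))]

private lemma flip_prod (p : ℕ) :
    (∏ l ∈ Finset.Icc 1 p, (X + C (2 * (l : ℤ) - 1)))
      = (∏ l ∈ Finset.Icc 1 p, (X - C (2 * (l : ℤ) - 1))).comp (X + C (2 * (p : ℤ))) := by
  rw [Polynomial.prod_comp]
  simp only [sub_comp, X_comp, C_comp]
  refine Finset.prod_bij' (fun l _ => p + 1 - l) (fun l _ => p + 1 - l) ?_ ?_ ?_ ?_ ?_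
  · intro a ha; simp only [Finset.mem_Icc] at ha ⊢; omega
  · intro a ha; simp only [Finset.mem_Icc] at ha ⊢; omega
  · intro a ha; simp only [Finset.mem_Icc] at ha; omega
  · intro a ha; simp only [Finset.mem_Icc] at ha; omega
  · intro a ha
    simp only [Finset.mem_Icc] at ha
    have h1 : ((p + 1 - a : ℕ) : ℤ) = (p : ℤ) + 1 - a := by omega
    rw [h1, add_sub_assoc, ← C_sub]
    congr 2
    ring

private lemma exists_index (p : ℕ) (hp : p.Prime) (hp3 : 3 ≤ p) (z : ZMod p) :
    ∃ l ∈ Finset.Icc 1 p, ((2 * (l : ℤ) - 1 : ℤ) : ZMod p) = z := by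
  haveI : Fact p.Prime := ⟨hp⟩
  have h2 : (2 : ZMod p) ≠ 0 := by
    intro hz
    have hd : p ∣ 2 := by
      apply (ZMod.natCast_eq_zero_iff 2 p).mp
      push_cast
      exact hz
    have := Nat.le_of_dvd (by norm_num) hd
    omega
  set w : ZMod p := (z + 1) * (2 : ZMod p)⁻¹ with hw
  have h2w : 2 * w = z + 1 := by
    rw [hw, mul_comm (z+1), ← mul_assoc, mul_inv_cancel₀ h2, one_mul]
  set l : ℕ := if w.val = 0 then p else w.val with hl
  refine ⟨l, ?_, ?_⟩
  · have := ZMod.val_lt w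
    rw [hl]; split <;> (simp only [Finset.mem_Icc]; omega)
  · have hcast : ((l : ℕ) : ZMod p) = w := by
      rw [hl]; split
      · rename_i h0
        rw [ZMod.natCast_self]
        exact ((ZMod.val_eq_zero w).mp h0).symm
      · exact ZMod.natCast_rightInverse w
    have hpush : ((2 * (l : ℤ) - 1 : ℤ) : ZMod p) = 2 * ((l : ℕ) : ZMod p) - 1 := by
      push_cast; ring
    rw [hpush, hcast, h2w]
    ring

private lemma prod_univ_X_sub_C (p : ℕ) [NeZero p] (hp : p.Prime) :
    ∏ a : ZMod p, (X - C a) = (X : (ZMod p)[X]) ^ p - X := by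
  haveI : Fact p.Prime := ⟨hp⟩
  have hmonic : ((X : (ZMod p)[X]) ^ p - X).Monic := by
    apply Polynomial.monic_X_pow_sub
    calc (X : (ZMod p)[X]).degree = 1 := degree_X
    _ < (p : WithBot ℕ) := by exact_mod_cast Nat.one_lt_cast.mpr hp.one_lt
  have hroots : ((X : (ZMod p)[X]) ^ p - X).roots = Finset.univ.val := by
    have := FiniteField.roots_X_pow_card_sub_X (ZMod p)
    rwa [ZMod.card p] at this
  have hcard : Multiset.card ((X : (ZMod p)[X]) ^ p - X).roots
      = ((X : (ZMod p)[X]) ^ p - X).natDegree := by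
    rw [hroots, FiniteField.X_pow_card_sub_X_natDegree_eq _ hp.one_lt]
    simp [ZMod.card p]
  have hmain := prod_multiset_X_sub_C_of_monic_of_roots_card_eq hmonic hcard
  rw [hroots] at hmain
  rw [Finset.prod_eq_multiset_prod]
  exact hmain

private lemma map_P (p : ℕ) (hp : p.Prime) (hp3 : 3 ≤ p) :
    (∏ l ∈ Finset.Icc 1 p, (X - C (2 * (l : ℤ) - 1))).map (Int.castRingHom (ZMod p))
      = X ^ p - X := by
  haveI : Fact p.Prime := ⟨hp⟩
  haveI : NeZero p := ⟨by omega⟩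
  rw [Polynomial.map_prod]
  simp only [Polynomial.map_sub, map_X, map_C]
  rw [← prod_univ_X_sub_C p hp]
  refine Finset.prod_bij (fun l _ => (((2 * (l : ℤ) - 1 : ℤ) : ZMod p))) ?_ ?_ ?_ ?_
  · intro a _; exact Finset.mem_univ _
  · intro a ha b hb hab
    simp only [Finset.mem_Icc] at ha hb
    have hsub : (((2 * (a : ℤ) - 1) - (2 * (b : ℤ) - 1) : ℤ) : ZMod p) = 0 := by
      push_cast
      push_cast at hab
      rw [sub_eq_zero]
      exact_mod_cast hab
    have hdvd : (p : ℤ) ∣ (2 * ((a : ℤ) - b)) := by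
      have := (ZMod.intCast_zmod_eq_zero_iff_dvd _ p).mp hsub
      convert this using 1
      ring
    have hp2 : ¬ (p : ℤ) ∣ 2 := by
      intro hd
      have : (p : ℤ) ≤ 2 := Int.le_of_dvd (by norm_num) hd
      omega
    have hdab : (p : ℤ) ∣ ((a : ℤ) - b) :=
      ((Int.Prime.dvd_mul' hp hdvd).resolve_left hp2)
    have : ((a : ℤ) - b) = 0 := Int.eq_zero_of_abs_lt_dvd hdab (by
      rw [abs_sub_lt_iff]; constructor <;> omega)
    omega
  · intro z _
    obtain ⟨l, hl, hlz⟩ := exists_index p hp hp3 z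
    exact ⟨l, hl, hlz⟩
  · intro a _; rfl

/-- For `p ≥ 3` prime and integers `j, h` with `p ∤ j`,
`∑_{i=1}^{p} ∏_{l ≠ i} (j² − (h−2l+1)²) ≡ ∑_{i=1}^{p} ∏_{l ≠ i} (j² − (h+2l−1)²) (mod p³)`. -/
theorem stmt1 (p : ℕ) (hp : p.Prime) (hp3 : 3 ≤ p) (j h : ℤ) (hj : ¬ (p : ℤ) ∣ j) :
    (∑ i ∈ Finset.Icc 1 p, ∏ l ∈ (Finset.Icc 1 p).erase i,
        (j ^ 2 - (h - 2 * (l : ℤ) + 1) ^ 2)) ≡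
    (∑ i ∈ Finset.Icc 1 p, ∏ l ∈ (Finset.Icc 1 p).erase i,
        (j ^ 2 - (h + 2 * (l : ℤ) - 1) ^ 2)) [ZMOD ((p : ℤ) ^ 3)] := by
  classical
  haveI : Fact p.Prime := ⟨hp⟩
  haveI : NeZero p := ⟨by omega⟩
  set P : Polynomial ℤ := ∏ l ∈ Finset.Icc 1 p, (X - C (2 * (l : ℤ) - 1)) with hPdef
  set u : ℤ := j - h with hu
  set v : ℤ := j + h with hv
  -- value identities
  have hGeval : ∀ t : ℤ, (∏ l ∈ Finset.Icc 1 p, (t - (2 * (l : ℤ) - 1))) = P.eval t := by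
    intro t; rw [hPdef, eval_prod]; simp
  have hDP : derivative P
      = ∑ i ∈ Finset.Icc 1 p, ∏ l ∈ (Finset.Icc 1 p).erase i, (X - C (2 * (l : ℤ) - 1)) := by
    rw [hPdef]; exact deriv_prod _ _ (fun l => by simp)
  have hG1 : ∀ t : ℤ, (∑ i ∈ Finset.Icc 1 p, ∏ l ∈ (Finset.Icc 1 p).erase i,
      (t - (2 * (l : ℤ) - 1))) = (derivative P).eval t := by
    intro t; rw [hDP, eval_finset_sum]
    refine Finset.sum_congr rfl fun i _ => ?_
    rw [eval_prod]; simp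
  have hflip : (∏ l ∈ Finset.Icc 1 p, (X + C (2 * (l : ℤ) - 1)))
      = P.comp (X + C (2 * (p : ℤ))) := by rw [hPdef]; exact flip_prod p
  have hH : ∀ t : ℤ, (∏ l ∈ Finset.Icc 1 p, (t + (2 * (l : ℤ) - 1)))
      = P.eval (t + 2 * (p : ℤ)) := by
    intro t
    have h1 := congrArg (Polynomial.eval t) hflip
    rw [eval_prod, eval_comp] at h1
    simp only [eval_add, eval_X, eval_C, eval_sub] at h1
    exact h1
  have hDflip : (∑ i ∈ Finset.Icc 1 p, ∏ l ∈ (Finset.Icc 1 p).erase i,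
      (X + C (2 * (l : ℤ) - 1))) = (derivative P).comp (X + C (2 * (p : ℤ))) := by
    have h1 := congrArg derivative hflip
    rw [deriv_prod _ _ (fun l => by simp), derivative_comp] at h1
    simpa using h1
  have hH1 : ∀ t : ℤ, (∑ i ∈ Finset.Icc 1 p, ∏ l ∈ (Finset.Icc 1 p).erase i,
      (t + (2 * (l : ℤ) - 1))) = (derivative P).eval (t + 2 * (p : ℤ)) := by
    intro t
    have h1 := congrArg (Polynomial.eval t) hDflip
    rw [eval_comp, eval_finset_sum] at h1
    simp only [eval_add, eval_X, eval_C] at h1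
    rw [← h1]
    refine Finset.sum_congr rfl fun i _ => ?_
    rw [eval_prod]; simp
  -- mod p facts
  have hmap := map_P p hp hp3
  rw [← hPdef] at hmap
  have hK1 : ∀ t : ℤ, (p : ℤ) ∣ P.eval t := by
    intro t
    have h0 := eval_intCast_map (Int.castRingHom (ZMod p)) P t
    rw [hmap] at h0
    simp only [eval_sub, eval_pow, eval_X, ZMod.pow_card, sub_self] at h0
    exact (ZMod.intCast_zmod_eq_zero_iff_dvd _ p).mp (by exact_mod_cast h0.symm)
  have hK2 : ∀ t : ℤ, (p : ℤ) ∣ (derivative (derivative P)).eval t := by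
    intro t
    have hzero : derivative (derivative ((X : (ZMod p)[X]) ^ p - X)) = 0 := by
      simp [derivative_X_pow, ZMod.natCast_self]
    have h0 := eval_intCast_map (Int.castRingHom (ZMod p)) (derivative (derivative P)) t
    rw [← derivative_map, ← derivative_map, hmap, hzero] at h0
    simp only [eval_zero] at h0
    exact (ZMod.intCast_zmod_eq_zero_iff_dvd _ p).mp (by exact_mod_cast h0.symm)
  have hp2 : ¬ (p : ℤ) ∣ 2 := by
    intro hd
    have : (p : ℤ) ≤ 2 := Int.le_of_dvd (by norm_num) hd
    omega
  have hK2' : ∀ t : ℤ, (p : ℤ) ∣ (hasseDeriv 2 P).eval t := by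
    intro t
    have hfact := congrFun (Polynomial.factorial_smul_hasseDeriv (R := ℤ) 2) P
    have h4 : (Nat.factorial 2 • hasseDeriv 2 (R := ℤ)) P = derivative (derivative P) := by
      rw [hfact]; rfl
    rw [LinearMap.smul_apply] at h4
    have h2 : (2 : ℤ) * (hasseDeriv 2 P).eval t = (derivative (derivative P)).eval t := by
      rw [← h4, Polynomial.eval_smul]
      simp [Nat.factorial, nsmul_eq_mul]
    have hdvd : (p : ℤ) ∣ 2 * (hasseDeriv 2 P).eval t := by rw [h2]; exact hK2 t
    exact (Int.Prime.dvd_mul' hp hdvd).resolve_left hp2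
  -- the two claims
  set L : ℤ := (∑ i ∈ Finset.Icc 1 p, ∏ l ∈ (Finset.Icc 1 p).erase i,
      (j ^ 2 - (h - 2 * (l : ℤ) + 1) ^ 2)) with hL
  set R : ℤ := (∑ i ∈ Finset.Icc 1 p, ∏ l ∈ (Finset.Icc 1 p).erase i,
      (j ^ 2 - (h + 2 * (l : ℤ) - 1) ^ 2)) with hR
  have claim_R : 2 * j * R = P.eval u * (derivative P).eval (v + 2 * (p : ℤ))
      + (derivative P).eval u * P.eval (v + 2 * (p : ℤ)) := by
    rw [hR, Finset.mul_sum]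
    have step : ∀ i ∈ Finset.Icc 1 p,
        2 * j * (∏ l ∈ (Finset.Icc 1 p).erase i, (j ^ 2 - (h + 2 * (l : ℤ) - 1) ^ 2))
        = P.eval u * (∏ l ∈ (Finset.Icc 1 p).erase i, (v + (2 * (l : ℤ) - 1)))
          + (∏ l ∈ (Finset.Icc 1 p).erase i, (u - (2 * (l : ℤ) - 1)))
            * P.eval (v + 2 * (p : ℤ)) := by
      intro i hi
      have hsplit : (∏ l ∈ (Finset.Icc 1 p).erase i, (j ^ 2 - (h + 2 * (l : ℤ) - 1) ^ 2))
          = (∏ l ∈ (Finset.Icc 1 p).erase i, (u - (2 * (l : ℤ) - 1)))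
            * (∏ l ∈ (Finset.Icc 1 p).erase i, (v + (2 * (l : ℤ) - 1))) := by
        rw [← Finset.prod_mul_distrib]
        refine Finset.prod_congr rfl fun l _ => ?_
        rw [hu, hv]; ring
      have e1 : (u - (2 * (i : ℤ) - 1))
          * (∏ l ∈ (Finset.Icc 1 p).erase i, (u - (2 * (l : ℤ) - 1))) = P.eval u := by
        rw [Finset.mul_prod_erase (Finset.Icc 1 p) (fun l => u - (2 * (l : ℤ) - 1)) hi]; exact hGeval u
      have e2 : (v + (2 * (i : ℤ) - 1))
          * (∏ l ∈ (Finset.Icc 1 p).erase i, (v + (2 * (l : ℤ) - 1)))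
          = P.eval (v + 2 * (p : ℤ)) := by
        rw [Finset.mul_prod_erase (Finset.Icc 1 p) (fun l => v + (2 * (l : ℤ) - 1)) hi]; exact hH v
      have h2j : 2 * j = (u - (2 * (i : ℤ) - 1)) + (v + (2 * (i : ℤ) - 1)) := by
        rw [hu, hv]; ring
      rw [hsplit, ← e1, ← e2, h2j]
      ring
    rw [Finset.sum_congr rfl step, Finset.sum_add_distrib, ← Finset.mul_sum,
      ← Finset.sum_mul, hH1 v, hG1 u]
  have claim_L : 2 * j * L = P.eval (u + 2 * (p : ℤ)) * (derivative P).eval v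
      + (derivative P).eval (u + 2 * (p : ℤ)) * P.eval v := by
    rw [hL, Finset.mul_sum]
    have step : ∀ i ∈ Finset.Icc 1 p,
        2 * j * (∏ l ∈ (Finset.Icc 1 p).erase i, (j ^ 2 - (h - 2 * (l : ℤ) + 1) ^ 2))
        = P.eval (u + 2 * (p : ℤ)) * (∏ l ∈ (Finset.Icc 1 p).erase i, (v - (2 * (l : ℤ) - 1)))
          + (∏ l ∈ (Finset.Icc 1 p).erase i, (u + (2 * (l : ℤ) - 1))) * P.eval v := by
      intro i hi
      have hsplit : (∏ l ∈ (Finset.Icc 1 p).erase i, (j ^ 2 - (h - 2 * (l : ℤ) + 1) ^ 2))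
          = (∏ l ∈ (Finset.Icc 1 p).erase i, (u + (2 * (l : ℤ) - 1)))
            * (∏ l ∈ (Finset.Icc 1 p).erase i, (v - (2 * (l : ℤ) - 1))) := by
        rw [← Finset.prod_mul_distrib]
        refine Finset.prod_congr rfl fun l _ => ?_
        rw [hu, hv]; ring
      have e1 : (u + (2 * (i : ℤ) - 1))
          * (∏ l ∈ (Finset.Icc 1 p).erase i, (u + (2 * (l : ℤ) - 1)))
          = P.eval (u + 2 * (p : ℤ)) := by
        rw [Finset.mul_prod_erase (Finset.Icc 1 p) (fun l => u + (2 * (l : ℤ) - 1)) hi]; exact hH u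
      have e2 : (v - (2 * (i : ℤ) - 1))
          * (∏ l ∈ (Finset.Icc 1 p).erase i, (v - (2 * (l : ℤ) - 1))) = P.eval v := by
        rw [Finset.mul_prod_erase (Finset.Icc 1 p) (fun l => v - (2 * (l : ℤ) - 1)) hi]; exact hGeval v
      have h2j : 2 * j = (u + (2 * (i : ℤ) - 1)) + (v - (2 * (i : ℤ) - 1)) := by
        rw [hu, hv]; ring
      rw [hsplit, ← e1, ← e2, h2j]
      ring
    rw [Finset.sum_congr rfl step, Finset.sum_add_distrib, ← Finset.mul_sum,
      ← Finset.sum_mul, hG1 v, hH1 u]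
  -- Taylor expansions
  obtain ⟨e1, he1⟩ := taylor3 P u (2 * (p : ℤ))
  obtain ⟨e2, he2⟩ := taylor3 P v (2 * (p : ℤ))
  obtain ⟨f1, hf1⟩ := taylor3 (derivative P) u (2 * (p : ℤ))
  obtain ⟨f2, hf2⟩ := taylor3 (derivative P) v (2 * (p : ℤ))
  have hTa1 : P.eval (u + 2 * (p : ℤ)) = P.eval u + (derivative P).eval u * (2 * (p : ℤ))
      + (hasseDeriv 2 P).eval u * (2 * (p : ℤ)) ^ 2 + (2 * (p : ℤ)) ^ 3 * e1 := by
    linarith [he1]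
  have hTa2 : P.eval (v + 2 * (p : ℤ)) = P.eval v + (derivative P).eval v * (2 * (p : ℤ))
      + (hasseDeriv 2 P).eval v * (2 * (p : ℤ)) ^ 2 + (2 * (p : ℤ)) ^ 3 * e2 := by
    linarith [he2]
  have hTd1 : (derivative P).eval (u + 2 * (p : ℤ)) = (derivative P).eval u
      + (derivative (derivative P)).eval u * (2 * (p : ℤ))
      + (hasseDeriv 2 (derivative P)).eval u * (2 * (p : ℤ)) ^ 2 + (2 * (p : ℤ)) ^ 3 * f1 := by
    linarith [hf1]
  have hTd2 : (derivative P).eval (v + 2 * (p : ℤ)) = (derivative P).eval v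
      + (derivative (derivative P)).eval v * (2 * (p : ℤ))
      + (hasseDeriv 2 (derivative P)).eval v * (2 * (p : ℤ)) ^ 2 + (2 * (p : ℤ)) ^ 3 * f2 := by
    linarith [hf2]
  obtain ⟨a1, ha1⟩ := hK1 u
  obtain ⟨a2, ha2⟩ := hK1 v
  obtain ⟨b1, hb1⟩ := hK2 u
  obtain ⟨b2, hb2⟩ := hK2 v
  obtain ⟨g1, hg1⟩ := hK2' u
  obtain ⟨g2, hg2⟩ := hK2' v
  have key : ((p : ℤ)) ^ 3 ∣ 2 * j * R - 2 * j * L := by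
    rw [claim_R, claim_L, hTa1, hTa2, hTd1, hTd2, ha1, ha2, hb1, hb2, hg1, hg2]
    refine ⟨2 * a1 * b2 + 4 * a1 * ((hasseDeriv 2 (derivative P)).eval v)
      + 8 * (p : ℤ) * a1 * f2 + 4 * g2 * ((derivative P).eval u)
      + 8 * e2 * ((derivative P).eval u) - 4 * g1 * ((derivative P).eval v)
      - 8 * e1 * ((derivative P).eval v) - 2 * a2 * b1
      - 4 * a2 * ((hasseDeriv 2 (derivative P)).eval u) - 8 * (p : ℤ) * a2 * f1, ?_⟩
    ring
  -- cancellation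
  have hpz : Prime ((p : ℤ)) := Nat.prime_iff_prime_int.mp hp
  have hpj2 : ¬ (p : ℤ) ∣ 2 * j := by
    intro hd
    rcases Int.Prime.dvd_mul' hp hd with h1 | h1
    · exact hp2 h1
    · exact hj h1
  have hcop : IsCoprime ((p : ℤ) ^ 3) (2 * j) :=
    ((hpz.coprime_iff_not_dvd).mpr hpj2).pow_left
  have hdvd : ((p : ℤ)) ^ 3 ∣ R - L :=
    hcop.dvd_of_dvd_mul_left
      (by rw [show 2 * j * (R - L) = 2 * j * R - 2 * j * L from by ring]; exact key)
  exact (Int.modEq_iff_dvd).mpr hdvd
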